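/- Let G be a minor minimal not-apex graph of connectivity 2 with 2-cut {a,b} and G - a, b = G_1 ⊔ G_2, where G_i + a denotes the induced subgraph on V(G_i) ∪ {a}. Then, up to swapping G_1 and G_2, the graphs G_1 + a and G_1 + b are planar while G_2 + a and G_2 + b are nonplanar. -/

import Mathlib

open SimpleGraph

def K5 : SimpleGraph (Fin 5) := ⊤

def K33 : SimpleGraph (Fin 3 ⊕ Fin 3) := completeBipartiteGraph (Fin 3) (Fin 3)

/-- `H` is a minor of `G`: branch-set (model) definition. -/
def IsMinor {W V : Type} (H : SimpleGraph W) (G : SimpleGraph V) : Prop :=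
  ∃ f : W → Set V,
    (∀ w, (f w).Nonempty) ∧
    (∀ w, (G.induce (f w)).Connected) ∧
    (Pairwise fun w₁ w₂ => Disjoint (f w₁) (f w₂)) ∧
    (∀ w₁ w₂, H.Adj w₁ w₂ → ∃ x ∈ f w₁, ∃ y ∈ f w₂, G.Adj x y)

/-- Planarity, via Wagner's theorem: no `K₅` minor and no `K₃,₃` minor. -/
def Planar {V : Type} (G : SimpleGraph V) : Prop :=
  ¬ IsMinor K5 G ∧ ¬ IsMinor K33 G

def ProperMinor {W V : Type} (H : SimpleGraph W) (G : SimpleGraph V) : Prop :=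
  IsMinor H G ∧ ¬ IsMinor G H

def MinorMinimal (P : {V : Type} → SimpleGraph V → Prop) {V : Type} (G : SimpleGraph V) : Prop :=
  P G ∧ ∀ (W : Type) (H : SimpleGraph W), ProperMinor H G → ¬ P H

/-- `G` together with the extra edge `uv`. -/
def AddEdge {V : Type} (G : SimpleGraph V) (u v : V) : SimpleGraph V :=
  G ⊔ fromEdgeSet {s(u, v)}

/-- `G - v`. -/
def DeleteVert {V : Type} (G : SimpleGraph V) (v : V) :=
  G.induce {u | u ≠ v}

/-- Disjoint union of graphs. -/
def DisjUnion {α β : Type} (G : SimpleGraph α) (H : SimpleGraph β) : SimpleGraph (α ⊕ β) :=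
  (G.map Sum.inl) ⊔ (H.map Sum.inr)

/-- `K₂ ∪̇ G`: a `K₂` glued to `G` at the vertex `v` (a pendant vertex). -/
def Pendant {V : Type} (G : SimpleGraph V) (v : V) : SimpleGraph (Option V) :=
  (G.map some) ⊔ fromEdgeSet {s(none, some v)}

/-- The result of subdividing the edge `uv` of `G`, the new vertex being `none`. -/
def SubdivideEdge {V : Type} (G : SimpleGraph V) (u v : V) : SimpleGraph (Option V) :=
  ((G.deleteEdges {s(u, v)}).map some) ⊔
    fromEdgeSet {s(none, some u), s(none, some v)}

/-- The contraction `G/uv` (realized on the same vertex set: `v` is absorbed into `u`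
and left as an isolated vertex, which does not affect planarity). -/
def ContractEdge {V : Type} (G : SimpleGraph V) (u v : V) : SimpleGraph V where
  Adj a b := a ≠ b ∧ ∃ x y, G.Adj x y ∧
    ((x = v ∧ a = u) ∨ (x ≠ v ∧ a = x)) ∧ ((y = v ∧ b = u) ∨ (y ≠ v ∧ b = y))
  symm := by
    refine ⟨?_⟩
    rintro a b ⟨hab, x, y, hxy, hx, hy⟩
    exact ⟨hab.symm, y, x, hxy.symm, hy, hx⟩
  loopless := by refine ⟨?_⟩; rintro a ⟨h, -⟩; exact h rfl

/-- `κ(G) ≥ k`: more than `k` vertices and no cut set of fewer than `k` vertices. -/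
def VertexConnAtLeast {V : Type} [Fintype V] (G : SimpleGraph V) (k : ℕ) : Prop :=
  k < Fintype.card V ∧
    ∀ U : Finset V, U.card < k → (G.induce ((↑U : Set V)ᶜ)).Connected

def K5e : SimpleGraph (Fin 5) := K5.deleteEdges {s(0, 1)}

def K33e : SimpleGraph (Fin 3 ⊕ Fin 3) := K33.deleteEdges {s(Sum.inl 0, Sum.inr 0)}

def K2 : SimpleGraph (Fin 2) := ⊤

/-- A planar graph is maximally planar (equivalently, a plane triangulation)
if adding any edge between nonadjacent vertices destroys planarity. -/
def MaximalPlanar {V : Type} (G : SimpleGraph V) : Prop :=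
  Planar G ∧ ∀ u v : V, u ≠ v → ¬ G.Adj u v → ¬ Planar (AddEdge G u v)

/-- Almost nonplanar. -/
def AN {V : Type} (G : SimpleGraph V) : Prop :=
  Planar G ∧ ∃ u v : V, u ≠ v ∧ ¬ G.Adj u v ∧ ¬ Planar (AddEdge G u v)

/-- Completely almost nonplanar. -/
def CAN {V : Type} (G : SimpleGraph V) : Prop :=
  Planar G ∧ (∃ u v : V, u ≠ v ∧ ¬ G.Adj u v) ∧
    ∀ u v : V, u ≠ v → ¬ G.Adj u v → ¬ Planar (AddEdge G u v)

/-- Completely apex: every vertex-deleted subgraph is planar. -/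
def CompletelyApex {V : Type} (G : SimpleGraph V) : Prop :=
  ∀ v : V, Planar (DeleteVert G v)

/-- Incompletely apex. -/
def IA {V : Type} (G : SimpleGraph V) : Prop :=
  ∃ v : V, ¬ Planar (DeleteVert G v)

/-- Incompletely edge apex. -/
def IE {V : Type} (G : SimpleGraph V) : Prop :=
  ∃ e ∈ G.edgeSet, ¬ Planar (G.deleteEdges {e})

/-- Incompletely contraction apex. -/
def IC {V : Type} (G : SimpleGraph V) : Prop :=
  ∃ u v : V, G.Adj u v ∧ ¬ Planar (ContractEdge G u v)

/-- Not apex. -/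
def NA {V : Type} (G : SimpleGraph V) : Prop :=
  ∀ v : V, ¬ Planar (DeleteVert G v)

/-- Not edge apex. -/
def NE {V : Type} (G : SimpleGraph V) : Prop :=
  ∀ e ∈ G.edgeSet, ¬ Planar (G.deleteEdges {e})

/-- Edge apex: some edge deletion (or the graph itself) is planar. -/
def EdgeApex {V : Type} (G : SimpleGraph V) : Prop :=
  Planar G ∨ ∃ e ∈ G.edgeSet, Planar (G.deleteEdges {e})

lemma reach_closed {α : Type*} {K : SimpleGraph α} {P : α → Prop}
    (hP : ∀ x y, K.Adj x y → P x → P y) :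
    ∀ {u v : α}, K.Reachable u v → P u → P v := by
  intro u v h hu
  obtain ⟨p⟩ := h
  induction p with
  | nil => exact hu
  | cons h p ih => exact ih (hP _ _ h hu)

lemma induce_adj' {V : Type} {G : SimpleGraph V} {s : Set V} {x y : s} :
    (G.induce s).Adj x y ↔ G.Adj ↑x ↑y := Iff.rfl

lemma isMinor_of_le {V : Type} {H G : SimpleGraph V} (h : H ≤ G) : IsMinor H G := by
  refine ⟨fun w => {w}, fun w => ⟨w, rfl⟩, fun w => ?_, ?_, ?_⟩
  · refine Connected.mk ?_ (nonempty := ⟨⟨w, rfl⟩⟩)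
    intro x y
    have : x = y := Subtype.ext (by rw [x.2, y.2])
    exact this ▸ Reachable.refl _
  · intro w₁ w₂ hne
    simp [Set.disjoint_left]
    exact fun h' => hne h'
  · intro w₁ w₂ hadj
    exact ⟨w₁, rfl, w₂, rfl, h hadj⟩

/-- Reformulation of minors of induced subgraphs via branch sets in `V`. -/
lemma isMinor_induce_iff {W V : Type} {K : SimpleGraph W} {G : SimpleGraph V} {A : Set V} :
    IsMinor K (G.induce A) ↔ ∃ f : W → Set V,
      (∀ w, f w ⊆ A) ∧ (∀ w, (f w).Nonempty) ∧
      (∀ w, (G.induce (f w)).Connected) ∧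
      (Pairwise fun w₁ w₂ => Disjoint (f w₁) (f w₂)) ∧
      (∀ w₁ w₂, K.Adj w₁ w₂ → ∃ x ∈ f w₁, ∃ y ∈ f w₂, G.Adj x y) := by
  constructor
  · rintro ⟨f, hne, hconn, hdisj, hadj⟩
    refine ⟨fun w => Subtype.val '' f w, fun w => ?_, fun w => ?_, fun w => ?_, ?_, ?_⟩
    · rintro x ⟨y, -, rfl⟩; exact y.2
    · obtain ⟨x, hx⟩ := hne w; exact ⟨↑x, x, hx, rfl⟩
    · refine Connected.map (f := ⟨fun x => ⟨x.1.1, ⟨x.1, x.2, rfl⟩⟩, ?_⟩) ?_ (hconn w)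
      · intro x y hxy; exact hxy
      · rintro ⟨y, x, hx, rfl⟩; exact ⟨⟨x, hx⟩, rfl⟩
    · intro w₁ w₂ hne'
      rw [Set.disjoint_left]
      rintro x ⟨x₁, h₁, rfl⟩ ⟨x₂, h₂, hx⟩
      have : x₂ = x₁ := Subtype.ext hx
      exact (hdisj hne').le_bot ⟨h₁, this ▸ h₂⟩
    · intro w₁ w₂ h
      obtain ⟨x, hx, y, hy, hxy⟩ := hadj _ _ h
      exact ⟨↑x, ⟨x, hx, rfl⟩, ↑y, ⟨y, hy, rfl⟩, hxy⟩
  · rintro ⟨f, hsub, hne, hconn, hdisj, hadj⟩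
    refine ⟨fun w => {x : A | ↑x ∈ f w}, fun w => ?_, fun w => ?_, ?_, ?_⟩
    · obtain ⟨x, hx⟩ := hne w; exact ⟨⟨x, hsub w hx⟩, hx⟩
    · refine Connected.map (f := ⟨fun (y : ↑(f w)) => ⟨⟨y.1, hsub w y.2⟩, y.2⟩, ?_⟩) ?_ (hconn w)
      · intro x y hxy; exact hxy
      · rintro ⟨⟨x, hxA⟩, hxf⟩; exact ⟨⟨x, hxf⟩, rfl⟩
    · intro w₁ w₂ hne'
      rw [Set.disjoint_left]
      intro x hx hx'
      exact (hdisj hne').le_bot ⟨hx, hx'⟩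
    · intro w₁ w₂ h
      obtain ⟨x, hx, y, hy, hxy⟩ := hadj _ _ h
      exact ⟨⟨x, hsub _ hx⟩, hx, ⟨y, hsub _ hy⟩, hy, hxy⟩

lemma minor_transfer {W V : Type} {K : SimpleGraph W} {G H : SimpleGraph V} {Q R : Set V}
    (hQR : Q ⊆ R) (hGH : ∀ x ∈ Q, ∀ y ∈ Q, G.Adj x y → H.Adj x y)
    (h : IsMinor K (G.induce Q)) : IsMinor K (H.induce R) := by
  rw [isMinor_induce_iff] at h ⊢
  obtain ⟨f, hsub, hne, hconn, hdisj, hadj⟩ := h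
  refine ⟨f, fun w => (hsub w).trans hQR, hne, fun w => ?_, hdisj, ?_⟩
  · refine (hconn w).mono ?_
    intro x y hxy
    exact hGH _ (hsub w x.2) _ (hsub w y.2) hxy
  · intro w₁ w₂ h
    obtain ⟨x, hx, y, hy, hxy⟩ := hadj _ _ h
    exact ⟨x, hx, y, hy, hGH _ (hsub _ hx) _ (hsub _ hy) hxy⟩

lemma minor_edge_card_le {W V : Type} [Fintype V] {G' : SimpleGraph W} {H' : SimpleGraph V}
    (h : IsMinor G' H') : Nat.card G'.edgeSet ≤ Nat.card H'.edgeSet := by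
  classical
  obtain ⟨f, hne, hconn, hdisj, hadj⟩ := h
  have hmem : ∀ {z : V} {u u' : W}, z ∈ f u → z ∈ f u' → u = u' := by
    intro z u u' h1 h2
    by_contra hne'
    exact (hdisj hne').le_bot ⟨h1, h2⟩
  have key : ∀ e : G'.edgeSet, ∃ e' : H'.edgeSet, ∃ w₁ w₂ x y,
      e.1 = s(w₁, w₂) ∧ x ∈ f w₁ ∧ y ∈ f w₂ ∧ e'.1 = s(x, y) := by
    rintro ⟨e, he⟩
    induction e using Sym2.ind with
    | _ w₁ w₂ =>
      rw [SimpleGraph.mem_edgeSet] at he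
      obtain ⟨x, hx, y, hy, hxy⟩ := hadj _ _ he
      exact ⟨⟨s(x, y), hxy⟩, w₁, w₂, x, y, rfl, hx, hy, rfl⟩
  choose φ w₁ w₂ x y he hx hy he' using key
  refine Nat.card_le_card_of_injective φ ?_
  intro e₁ e₂ hφ
  have hs : s(x e₁, y e₁) = s(x e₂, y e₂) := by rw [← he' e₁, ← he' e₂, hφ]
  rw [Sym2.eq_iff] at hs
  apply Subtype.ext
  rw [he e₁, he e₂]
  rcases hs with ⟨h1, h2⟩ | ⟨h1, h2⟩
  · rw [hmem (hx e₁) (h1 ▸ hx e₂), hmem (hy e₁) (h2 ▸ hy e₂)]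
  · rw [hmem (hx e₁) (h1 ▸ hy e₂), hmem (hy e₁) (h2 ▸ hx e₂), Sym2.eq_swap]

/-- Core construction: if all branch sets other than `w₀`'s live in `A \ {a}` and `w₀`'s
branch set contains `a`, the minor can be realized inside `A`. -/
lemma split_core {W V : Type} {K : SimpleGraph W} {G : SimpleGraph V} {A B : Set V} {a : V}
    (haA : a ∈ A)
    (hcross : ∀ x ∈ A, ∀ y ∈ B, x ≠ a → y ≠ a → ¬ G.Adj x y)
    (f : W → Set V) (hsub : ∀ w, f w ⊆ A ∪ B) (hne : ∀ w, (f w).Nonempty)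
    (hconn : ∀ w, (G.induce (f w)).Connected)
    (hdisj : Pairwise fun u v => Disjoint (f u) (f v))
    (hadj : ∀ u v, K.Adj u v → ∃ x ∈ f u, ∃ y ∈ f v, G.Adj x y)
    (w₀ : W) (haf : a ∈ f w₀)
    (hall : ∀ w, w ≠ w₀ → f w ⊆ A \ {a}) :
    IsMinor K (G.induce A) := by
  classical
  rw [isMinor_induce_iff]
  set g : W → Set V := fun w => if w = w₀ then f w₀ ∩ A else f w with hg
  have hg₀ : g w₀ = f w₀ ∩ A := if_pos rfl
  have hgne : ∀ w, w ≠ w₀ → g w = f w := fun w h => if_neg h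
  have hgsub : ∀ w, g w ⊆ f w := by
    intro w
    by_cases h : w = w₀
    · subst h; rw [hg₀]; exact Set.inter_subset_left
    · rw [hgne w h]
  have haf' : a ∈ f w₀ ∩ A := ⟨haf, haA⟩
  -- membership transfer into g w₀ for endpoints of cross edges
  have hintoA : ∀ x ∈ f w₀, ∀ y, y ∈ A \ {a} → G.Adj x y → x ∈ A := by
    intro x hx y hy hxy
    by_cases hxA : x ∈ A
    · exact hxA
    · have hxB : x ∈ B := (hsub w₀ hx).resolve_left hxA
      have hxa : x ≠ a := fun h => hxA (h ▸ haA)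
      exact absurd hxy.symm (hcross _ hy.1 _ hxB hy.2 hxa)
  refine ⟨g, ?_, ?_, ?_, ?_, ?_⟩
  · intro w
    by_cases h : w = w₀
    · subst h; rw [hg₀]; exact Set.inter_subset_right
    · rw [hgne w h]; exact (hall w h).trans Set.diff_subset
  · intro w
    by_cases h : w = w₀
    · subst h; rw [hg₀]; exact ⟨a, haf'⟩
    · rw [hgne w h]; exact hne w
  · intro w
    by_cases h : w = w₀
    · subst h
      rw [hg₀]
      have key : ∀ u : ↑(f w), ∀ hu : ↑u ∈ A,
          (G.induce (f w ∩ A)).Reachable ⟨↑u, u.2, hu⟩ ⟨a, haf'⟩ := by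
        intro u hu
        have := reach_closed
          (K := G.induce (f w))
          (P := fun z => ∀ hz : ↑z ∈ A,
            (G.induce (f w ∩ A)).Reachable ⟨↑z, z.2, hz⟩ ⟨a, haf'⟩)
          ?_ ((hconn w).preconnected ⟨a, haf⟩ u) ?_
        · exact this hu
        · intro z z' hzz' hz hz'A
          by_cases hzA : ↑z ∈ A
          · have hadj' : (G.induce (f w ∩ A)).Adj ⟨↑z', z'.2, hz'A⟩ ⟨↑z, z.2, hzA⟩ :=
              hzz'.symm
            exact hadj'.reachable.trans (hz hzA)
          · have hzB : ↑z ∈ B := (hsub w z.2).resolve_left hzA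
            have hza : (↑z : V) ≠ a := fun h => hzA (h ▸ haA)
            by_cases hz'a : (↑z' : V) = a
            · have : (⟨↑z', z'.2, hz'A⟩ : ↑(f w ∩ A)) = ⟨a, haf'⟩ := Subtype.ext hz'a
              rw [this]
            · exact absurd hzz'.symm (hcross _ hz'A _ hzB hz'a hza)
        · intro hz
          exact Reachable.refl _
      refine Connected.mk ?_ (nonempty := ⟨⟨a, haf'⟩⟩)
      intro u v
      exact (key ⟨↑u, u.2.1⟩ u.2.2).trans (key ⟨↑v, v.2.1⟩ v.2.2).symm
    · rw [hgne w h]; exact hconn w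
  · intro u v huv
    exact ((hdisj huv).mono (hgsub u) (hgsub v))
  · intro u v huv
    obtain ⟨x, hx, y, hy, hxy⟩ := hadj _ _ huv
    have step : ∀ u v : W, u ≠ v → ∀ x ∈ f u, ∀ y ∈ f v, G.Adj x y → x ∈ g u := by
      intro u v huv x hx y hy hxy
      by_cases h : u = w₀
      · subst h
        have hv : v ≠ u := fun h' => huv h'.symm
        rw [hg₀]
        exact ⟨hx, hintoA x hx y (hall v hv hy) hxy⟩
      · rw [hgne u h]; exact hx
    exact ⟨x, step u v huv.ne x hx y hy hxy, y, step v u huv.ne' y hy x hx hxy.symm, hxy⟩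

lemma split_minor {W V : Type} {K : SimpleGraph W} {G : SimpleGraph V} {A B : Set V} {a : V}
    (haA : a ∈ A) (haB : a ∈ B) (hAB : ∀ x, x ∈ A → x ∈ B → x = a)
    (hcross : ∀ x ∈ A, ∀ y ∈ B, x ≠ a → y ≠ a → ¬ G.Adj x y)
    (hKconn : K.Connected)
    (hKdel : ∀ w : W, (K.induce {u | u ≠ w}).Connected)
    (hm : IsMinor K (G.induce (A ∪ B))) :
    IsMinor K (G.induce A) ∨ IsMinor K (G.induce B) := by
  classical
  rw [isMinor_induce_iff] at hm
  obtain ⟨f, hsub, hne, hconn, hdisj, hadj⟩ := hm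
  have hcross' : ∀ x ∈ B, ∀ y ∈ A, x ≠ a → y ≠ a → ¬ G.Adj x y := by
    intro x hx y hy hxa hya hxy
    exact hcross y hy x hx hya hxa hxy.symm
  have hAB' : ∀ x, x ∈ B → x ∈ A → x = a := fun x hx hy => hAB x hy hx
  -- each branch set avoiding a lies in A \ {a} or B \ {a}
  have htyped : ∀ w, a ∉ f w → (f w ⊆ A \ {a}) ∨ (f w ⊆ B \ {a}) := by
    intro w haw
    have hnota : ∀ z : ↑(f w), (↑z : V) ≠ a := fun z h => haw (h ▸ z.2)
    by_cases hA : f w ⊆ A \ {a}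
    · exact Or.inl hA
    · right
      obtain ⟨x, hx, hxA⟩ := Set.not_subset.1 hA
      have hxB : x ∈ B \ {a} := by
        rcases hsub w hx with h | h
        · exact absurd ⟨h, fun h' => haw (h' ▸ hx)⟩ hxA
        · exact ⟨h, fun h' => haw (h' ▸ hx)⟩
      -- everything in f w is reachable from x, and B-ness propagates
      intro y hy
      have hreach := (hconn w).preconnected ⟨x, hx⟩ ⟨y, hy⟩
      have := reach_closed (K := G.induce (f w))
        (P := fun z => (↑z : V) ∈ B \ {a}) ?_ hreach hxB
      · exact this
      · intro z z' hzz' hz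
        refine ⟨?_, hnota z'⟩
        rcases hsub w z'.2 with h | h
        · exact absurd hzz' (hcross' _ hz.1 _ h hz.2 (hnota z'))
        · exact h
  -- no K-edge between an A-typed and a B-typed branch set
  have hnoedge : ∀ u v, f u ⊆ A \ {a} → f v ⊆ B \ {a} → ¬ K.Adj u v := by
    intro u v hu hv huv
    obtain ⟨x, hx, y, hy, hxy⟩ := hadj _ _ huv
    exact hcross _ (hu hx).1 _ (hv hy).1 (hu hx).2 (hv hy).2 hxy
  by_cases h0 : ∃ w₀, a ∈ f w₀
  · obtain ⟨w₀, haf⟩ := h0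
    have hother : ∀ w, w ≠ w₀ → a ∉ f w := by
      intro w hw h
      exact (hdisj hw).le_bot ⟨h, haf⟩
    -- all branch sets other than w₀'s have the same type
    by_cases hallA : ∀ w, w ≠ w₀ → f w ⊆ A \ {a}
    · exact Or.inl (split_core haA hcross f hsub hne hconn hdisj hadj w₀ haf hallA)
    · refine Or.inr (split_core (B := A) haB hcross' f
        (fun w => (hsub w).trans (by rw [Set.union_comm])) hne hconn hdisj hadj w₀ haf ?_)
      push_neg at hallA
      obtain ⟨w₁, hw₁, hw₁A⟩ := hallA
      have hw₁B : f w₁ ⊆ B \ {a} := (htyped w₁ (hother w₁ hw₁)).resolve_left hw₁A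
      -- propagate B-typedness through K minus w₀
      intro w hw
      have hreach := (hKdel w₀).preconnected ⟨w₁, hw₁⟩ ⟨w, hw⟩
      refine reach_closed (K := K.induce {u | u ≠ w₀})
        (P := fun z => f ↑z ⊆ B \ {a}) ?_ hreach hw₁B
      intro z z' hzz' hz
      rcases htyped ↑z' (hother _ z'.2) with h | h
      · exact absurd hzz'.symm (hnoedge _ _ h hz)
      · exact h
  · push_neg at h0
    obtain ⟨w₁⟩ := hKconn.nonempty
    rcases htyped w₁ (h0 w₁) with h | h
    · left
      rw [isMinor_induce_iff]
      refine ⟨f, fun w => ?_, hne, hconn, hdisj, hadj⟩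
      have := reach_closed (K := K) (P := fun z => f z ⊆ A \ {a}) ?_
        (hKconn.preconnected w₁ w) h
      · exact this.trans Set.diff_subset
      · intro z z' hzz' hz
        rcases htyped z' (h0 z') with h' | h'
        · exact h'
        · exact absurd hzz' (hnoedge _ _ hz h')
    · right
      rw [isMinor_induce_iff]
      refine ⟨f, fun w => ?_, hne, hconn, hdisj, hadj⟩
      have := reach_closed (K := K) (P := fun z => f z ⊆ B \ {a}) ?_
        (hKconn.preconnected w₁ w) h
      · exact this.trans Set.diff_subset
      · intro z z' hzz' hz
        rcases htyped z' (h0 z') with h' | h'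
        · exact absurd hzz'.symm (hnoedge _ _ h' hz)
        · exact h'

lemma K5_conn : K5.Connected := by
  refine Connected.mk ?_ (nonempty := ⟨0⟩)
  intro x y
  by_cases h : x = y
  · exact h ▸ Reachable.refl _
  · exact (by simpa [K5] using h : K5.Adj x y).reachable

lemma K5_del (w : Fin 5) : (K5.induce {u | u ≠ w}).Connected := by
  have : ∃ u : Fin 5, u ≠ w := exists_ne w
  refine Connected.mk ?_ (nonempty := ⟨⟨this.choose, this.choose_spec⟩⟩)
  intro x y
  by_cases h : x = y
  · exact h ▸ Reachable.refl _
  · have hxy : (↑x : Fin 5) ≠ ↑y := fun h' => h (Subtype.ext h')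
    have hadj : (K5.induce {u | u ≠ w}).Adj x y := (top_adj _ _).mpr hxy
    exact hadj.reachable

lemma K33_adj_lr (i j : Fin 3) : K33.Adj (Sum.inl i) (Sum.inr j) := by simp [K33]

lemma K33_conn : K33.Connected := by
  refine Connected.mk ?_ (nonempty := ⟨Sum.inl 0⟩)
  intro x y
  have hl : ∀ (i j : Fin 3), K33.Reachable (Sum.inl i) (Sum.inl j) :=
    fun i j => ((K33_adj_lr i 0).reachable).trans ((K33_adj_lr j 0).reachable).symm
  rcases x with i | i <;> rcases y with j | j
  · exact hl i j
  · exact (K33_adj_lr i j).reachable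
  · exact ((K33_adj_lr j i).reachable).symm
  · exact ((K33_adj_lr 0 i).reachable).symm.trans (K33_adj_lr 0 j).reachable

lemma K33_del (w : Fin 3 ⊕ Fin 3) : (K33.induce {u | u ≠ w}).Connected := by
  classical
  have hr : ∃ k : Fin 3, Sum.inr k ≠ w := by
    rcases w with m | m
    · exact ⟨0, by simp⟩
    · obtain ⟨k, hk⟩ := exists_ne m
      exact ⟨k, by simpa using hk⟩
  have hlft : ∃ k : Fin 3, Sum.inl k ≠ w := by
    rcases w with m | m
    · obtain ⟨k, hk⟩ := exists_ne m
      exact ⟨k, by simpa using hk⟩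
    · exact ⟨0, by simp⟩
  obtain ⟨kr, hkr⟩ := hr
  obtain ⟨kl, hkl⟩ := hlft
  refine Connected.mk ?_ (nonempty := ⟨⟨Sum.inr kr, hkr⟩⟩)
  intro x y
  have step : ∀ (u v : {u : Fin 3 ⊕ Fin 3 // u ∈ {z | z ≠ w}}), K33.Adj ↑u ↑v →
      (K33.induce {u | u ≠ w}).Reachable u v := fun u v h => (Adj.reachable h)
  -- connect any vertex to the fixed pair
  have toRL : ∀ (u : {u : Fin 3 ⊕ Fin 3 // u ∈ {z | z ≠ w}}),
      (K33.induce {u | u ≠ w}).Reachable u ⟨Sum.inr kr, hkr⟩ ∨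
      (K33.induce {u | u ≠ w}).Reachable u ⟨Sum.inl kl, hkl⟩ := by
    rintro ⟨(i | i), hu⟩
    · exact Or.inl (step _ _ (K33_adj_lr i kr))
    · exact Or.inr (step _ _ (K33_adj_lr kl i)).symm.symm.symm
  have hbase : (K33.induce {u | u ≠ w}).Reachable ⟨Sum.inr kr, hkr⟩ ⟨Sum.inl kl, hkl⟩ :=
    (step _ _ (K33_adj_lr kl kr)).symm

  rcases toRL x with hx | hx <;> rcases toRL y with hy | hy
  · exact hx.trans hy.symm
  · exact hx.trans (hbase.trans hy.symm)
  · exact hx.trans (hbase.symm.trans hy.symm)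
  · exact hx.trans hy.symm


lemma nonplanar_transfer {V : Type} {G H : SimpleGraph V} {Q R : Set V}
    (hQR : Q ⊆ R) (hGH : ∀ x ∈ Q, ∀ y ∈ Q, G.Adj x y → H.Adj x y)
    (hNQ : ¬ Planar (G.induce Q)) : ¬ Planar (H.induce R) := by
  intro hpl
  exact hNQ ⟨fun h5 => hpl.1 (minor_transfer hQR hGH h5),
             fun h33 => hpl.2 (minor_transfer hQR hGH h33)⟩

lemma lemI {V : Type} (G : SimpleGraph V) (hNA : NA G)
    (A B : Set V) (c d : V) (hcA : c ∈ A) (hcB : c ∈ B)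
    (hAB : ∀ x, x ∈ A → x ∈ B → x = c)
    (hcross : ∀ x ∈ A, ∀ y ∈ B, x ≠ c → y ≠ c → ¬ G.Adj x y)
    (hset : {u : V | u ≠ d} = A ∪ B)
    (hPA : Planar (G.induce A)) (hPB : Planar (G.induce B)) : False := by
  apply hNA d
  have h : ∀ {W : Type} (K : SimpleGraph W), K.Connected →
      (∀ w, (K.induce {u | u ≠ w}).Connected) → IsMinor K (DeleteVert G d) →
      IsMinor K (G.induce A) ∨ IsMinor K (G.induce B) := by
    intro W K hc hd hm
    apply split_minor hcA hcB hAB hcross hc hd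
    simp only [DeleteVert] at hm
    rwa [hset] at hm
  constructor
  · intro h5
    rcases h K5 K5_conn K5_del h5 with h' | h'
    exacts [hPA.1 h', hPB.1 h']
  · intro h33
    rcases h K33 K33_conn K33_del h33 with h' | h'
    exacts [hPA.2 h', hPB.2 h']

lemma lemII {V : Type} [Fintype V] (G : SimpleGraph V)
    (hmm : MinorMinimal (fun {_} H => NA H) G)
    (hconn2 : VertexConnAtLeast G 2)
    (P Q : Set V) (hPQ : Disjoint P Q) (hcover : ∀ v, v ∈ P ∨ v ∈ Q)
    (c : V) (hcP : c ∈ P) (d : V) (hdQ : d ∈ Q)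
    (s₁ : V) (hs₁ : s₁ ∈ P) (hs₁c : s₁ ≠ c)
    (hNP : ¬ Planar (G.induce P)) (hNQ : ¬ Planar (G.induce Q)) : False := by
  classical
  set H : SimpleGraph V :=
    { Adj := fun x y => G.Adj x y ∧ ((x ∈ P ∧ y ∈ P) ∨ (x ∈ Q ∧ y ∈ Q)),
      symm := ⟨by rintro x y ⟨h, h'⟩; exact ⟨h.symm, by tauto⟩⟩,
      loopless := ⟨fun x h => G.loopless.irrefl x h.1⟩ } with hHdef
  have hle : H ≤ G := fun {x y} h => h.1
  have hHadj : ∀ x y : V, H.Adj x y ↔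
      (G.Adj x y ∧ ((x ∈ P ∧ y ∈ P) ∨ (x ∈ Q ∧ y ∈ Q))) := fun x y => Iff.rfl
  have hNAH : NA H := by
    intro v
    rcases hcover v with hv | hv
    · have hQsub : Q ⊆ {u | u ≠ v} := by
        intro u hu h
        exact hPQ.le_bot ⟨h ▸ hv, hu⟩
      have := nonplanar_transfer (H := H) hQsub
        (fun x hx y hy hxy => ⟨hxy, Or.inr ⟨hx, hy⟩⟩) hNQ
      simpa [DeleteVert] using this
    · have hPsub : P ⊆ {u | u ≠ v} := by
        intro u hu h
        exact hPQ.le_bot ⟨hu, h ▸ hv⟩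
      have := nonplanar_transfer (H := H) hPsub
        (fun x hx y hy hxy => ⟨hxy, Or.inl ⟨hx, hy⟩⟩) hNP
      simpa [DeleteVert] using this
  have hne_edge : ∃ x y, G.Adj x y ∧ ¬ H.Adj x y := by
    by_contra hall
    push_neg at hall
    have hconn' := hconn2.2 {c} (by simp)
    have hdc : d ≠ c := fun h => hPQ.le_bot ⟨h ▸ hcP, hdQ⟩
    have hs₁m : s₁ ∈ (↑({c} : Finset V) : Set V)ᶜ := by simp [hs₁c]
    have hdm : d ∈ (↑({c} : Finset V) : Set V)ᶜ := by simp [hdc]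
    have hreach := hconn'.preconnected ⟨s₁, hs₁m⟩ ⟨d, hdm⟩
    have hdP : d ∈ P := by
      refine reach_closed (K := G.induce (↑({c} : Finset V) : Set V)ᶜ)
        (P := fun z => (z : V) ∈ P) ?_ hreach hs₁
      intro x y hxy hx
      rcases (hall _ _ hxy).2 with ⟨_, h⟩ | ⟨h, _⟩
      · exact h
      · exact absurd (hPQ.le_bot ⟨hx, h⟩) (by simp)
    exact absurd (hPQ.le_bot ⟨hdP, hdQ⟩) (by simp)
  have hproper : ProperMinor H G := by
    refine ⟨isMinor_of_le hle, ?_⟩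
    intro hGm
    obtain ⟨x, y, hGxy, hHxy⟩ := hne_edge
    have hss : H.edgeSet ⊂ G.edgeSet := by
      refine (edgeSet_mono hle).ssubset_of_ne ?_
      intro h
      apply hHxy
      have : s(x, y) ∈ G.edgeSet := hGxy
      rw [← h] at this
      exact this
    have h1 := minor_edge_card_le hGm
    have h2 : H.edgeSet.ncard < G.edgeSet.ncard := Set.ncard_lt_ncard hss (Set.toFinite _)
    rw [Nat.card_coe_set_eq, Nat.card_coe_set_eq] at h1
    omega
  exact hmm.2 V H hproper hNAH


/-- For a minor minimal not-apex graph of connectivity two with `2`-cut `{a, b}` and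
`G - a,b = G₁ ⊔ G₂`: up to relabeling, `G₁ + a` and `G₁ + b` are planar while
`G₂ + a` and `G₂ + b` are nonplanar. -/
theorem stmt_15 {V : Type} [Fintype V] (G : SimpleGraph V)
    (hmm : MinorMinimal (fun {_} H => NA H) G)
    (hconn : VertexConnAtLeast G 2 ∧ ¬ VertexConnAtLeast G 3)
    (a b : V) (hab : a ≠ b) (S1 S2 : Set V)
    (hpart : S1 ∪ S2 = {v | v ≠ a ∧ v ≠ b}) (hdisj : Disjoint S1 S2)
    (h1 : S1.Nonempty) (h2 : S2.Nonempty)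
    (hsep : ∀ x ∈ S1, ∀ y ∈ S2, ¬ G.Adj x y) :
    (Planar (G.induce (S1 ∪ {a})) ∧ Planar (G.induce (S1 ∪ {b})) ∧
      ¬ Planar (G.induce (S2 ∪ {a})) ∧ ¬ Planar (G.induce (S2 ∪ {b}))) ∨
    (Planar (G.induce (S2 ∪ {a})) ∧ Planar (G.induce (S2 ∪ {b})) ∧
      ¬ Planar (G.induce (S1 ∪ {a})) ∧ ¬ Planar (G.induce (S1 ∪ {b}))) := by
  classical
  have hNA : NA G := hmm.1
  have hS1ab : ∀ x ∈ S1, x ≠ a ∧ x ≠ b := by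
    intro x hx
    have : x ∈ S1 ∪ S2 := Or.inl hx
    rw [hpart] at this
    exact this
  have hS2ab : ∀ x ∈ S2, x ≠ a ∧ x ≠ b := by
    intro x hx
    have : x ∈ S1 ∪ S2 := Or.inr hx
    rw [hpart] at this
    exact this
  have hS12 : ∀ x, x ∈ S1 → x ∈ S2 → False := fun x h1 h2 => by
    simpa using hdisj.le_bot ⟨h1, h2⟩
  obtain ⟨s₁, hs₁⟩ := h1
  -- Lemma I instances
  have LI : ∀ c d : V, c ≠ d → ((c = a ∧ d = b) ∨ (c = b ∧ d = a)) →
      Planar (G.induce (S1 ∪ {c})) → Planar (G.induce (S2 ∪ {c})) → False := by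
    intro c d hcd hor hP1 hP2
    have hcab : c = a ∨ c = b := by tauto
    refine lemI G hNA (S1 ∪ {c}) (S2 ∪ {c}) c d (Or.inr rfl) (Or.inr rfl) ?_ ?_ ?_ hP1 hP2
    · rintro x (hx | hx) (hx' | hx')
      · exact absurd (hS12 x hx hx') (by simp)
      · exact hx'
      · exact hx
      · exact hx'
    · rintro x (hx | hx) y (hy | hy) hxc hyc
      · exact hsep x hx y hy
      · exact absurd hy hyc
      · exact absurd hx hxc
      · exact absurd hx hxc
    · ext u
      simp only [Set.mem_setOf_eq, Set.mem_union, Set.mem_singleton_iff]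
      constructor
      · intro hud
        by_cases huc : u = c
        · tauto
        · have huab : u ≠ a ∧ u ≠ b := by
            rcases hor with ⟨rfl, rfl⟩ | ⟨rfl, rfl⟩ <;> exact ⟨by tauto, by tauto⟩
          have : u ∈ S1 ∪ S2 := by rw [hpart]; exact huab
          rcases this with h | h
          · tauto
          · tauto
      · rintro ((h | h) | (h | h))
        · exact ((by rcases hor with ⟨rfl, rfl⟩ | ⟨rfl, rfl⟩ <;>
            [exact (hS1ab u h).2; exact (hS1ab u h).1]) : u ≠ d)
        · exact h ▸ hcd
        · exact ((by rcases hor with ⟨rfl, rfl⟩ | ⟨rfl, rfl⟩ <;>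
            [exact (hS2ab u h).2; exact (hS2ab u h).1]) : u ≠ d)
        · exact h ▸ hcd
  -- Lemma II instances
  have LII : ∀ c d : V, ((c = a ∧ d = b) ∨ (c = b ∧ d = a)) →
      ¬ Planar (G.induce (S1 ∪ {c})) → ¬ Planar (G.induce (S2 ∪ {d})) → False := by
    intro c d hor hN1 hN2
    have hcd : c ≠ d := by rcases hor with ⟨rfl, rfl⟩ | ⟨rfl, rfl⟩; exacts [hab, hab.symm]
    refine lemII G hmm hconn.1 (S1 ∪ {c}) (S2 ∪ {d}) ?_ ?_ c (Or.inr rfl) d (Or.inr rfl)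
      s₁ (Or.inl hs₁) ?_ hN1 hN2
    · rw [Set.disjoint_left]
      rintro x (hx | hx) (hx' | hx')
      · exact hS12 x hx hx'
      · rcases hor with ⟨rfl, rfl⟩ | ⟨rfl, rfl⟩
        · exact (hS1ab x hx).2 hx'
        · exact (hS1ab x hx).1 hx'
      · rcases hor with ⟨rfl, rfl⟩ | ⟨rfl, rfl⟩
        · exact (hS2ab x hx').1 hx
        · exact (hS2ab x hx').2 hx
      · rw [Set.mem_singleton_iff] at hx hx'
        exact hcd (hx ▸ hx')
    · intro v
      by_cases hva : v = a
      · rcases hor with ⟨rfl, rfl⟩ | ⟨rfl, rfl⟩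
        · exact Or.inl (Or.inr hva)
        · exact Or.inr (Or.inr hva)
      · by_cases hvb : v = b
        · rcases hor with ⟨rfl, rfl⟩ | ⟨rfl, rfl⟩
          · exact Or.inr (Or.inr hvb)
          · exact Or.inl (Or.inr hvb)
        · have : v ∈ S1 ∪ S2 := by rw [hpart]; exact ⟨hva, hvb⟩
          rcases this with h | h
          · exact Or.inl (Or.inl h)
          · exact Or.inr (Or.inl h)
    · rcases hor with ⟨rfl, rfl⟩ | ⟨rfl, rfl⟩
      · exact (hS1ab s₁ hs₁).1
      · exact (hS1ab s₁ hs₁).2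
  have L1 := LI a b hab (Or.inl ⟨rfl, rfl⟩)
  have L2 := LI b a hab.symm (Or.inr ⟨rfl, rfl⟩)
  have L3 := LII a b (Or.inl ⟨rfl, rfl⟩)
  have L4 := LII b a (Or.inr ⟨rfl, rfl⟩)
  by_cases hPa : Planar (G.induce (S1 ∪ {a})) <;>
    by_cases hPb : Planar (G.induce (S1 ∪ {b})) <;>
    by_cases hQa : Planar (G.induce (S2 ∪ {a})) <;>
    by_cases hQb : Planar (G.induce (S2 ∪ {b})) <;>
    tauto
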